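/- Let μ be a Borel probability measure on ℝ with Lévy mean 0, let κ ∈ (0, 1/2), and let R > 0. If pd((b_R)_* μ; 1 - κ) < R, where b_R(t) := max(-R, min(t, R)), then pd(μ; 1 - κ) = pd((b_R)_* μ; 1 - κ). -/

import Mathlib

open MeasureTheory Set
open scoped ENNReal

/-- The `α`-partial diameter of a Borel measure on `ℝ`. -/
noncomputable def partialDiam (μ : Measure ℝ) (α : ℝ) : ℝ≥0∞ :=
  ⨅ I ∈ {I : Set ℝ | MeasurableSet I ∧ ENNReal.ofReal α ≤ μ I}, EMetric.diam I

/-- The Lévy mean `Lm(μ) = inf { m : μ((-∞, m]) ≥ 1/2 }`. -/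
noncomputable def levyMean (μ : Measure ℝ) : ℝ :=
  sInf {m : ℝ | ENNReal.ofReal (1 / 2) ≤ μ (Set.Iic m)}

/-- The clipping function `b_R(t) = max (-R) (min t R)`. -/
def clip (R t : ℝ) : ℝ := max (-R) (min t R)

lemma measurable_clip (R : ℝ) : Measurable (clip R) :=
  measurable_const.max (measurable_id.min measurable_const)

lemma monotone_clip (R : ℝ) : Monotone (clip R) :=
  fun _ _ h => max_le_max le_rfl (min_le_min h le_rfl)

lemma clip_sub_le (R : ℝ) {a b : ℝ} (h : a ≤ b) : clip R b - clip R a ≤ b - a := by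
  unfold clip
  rcases min_cases a R with ⟨h1, h1'⟩ | ⟨h1, h1'⟩ <;> rcases min_cases b R with ⟨h2, h2'⟩ | ⟨h2, h2'⟩ <;>
    rw [h1, h2] <;>
    rcases max_cases (-R) a with ⟨h3, h3'⟩ | ⟨h3, h3'⟩ <;>
    rcases max_cases (-R) b with ⟨h4, h4'⟩ | ⟨h4, h4'⟩ <;>
    rcases max_cases (-R) R with ⟨h5, h5'⟩ | ⟨h5, h5'⟩ <;>
    simp only [h3, h4, h5] <;> linarith

lemma clip_preimage_Iic {R : ℝ} (hR : 0 < R) : clip R ⁻¹' Iic 0 = Iic 0 := by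
  ext t
  simp only [mem_preimage, mem_Iic, clip, max_le_iff, min_le_iff]
  constructor
  · rintro ⟨-, h | h⟩
    · exact h
    · linarith
  · intro h; exact ⟨by linarith, Or.inl h⟩

lemma clip_preimage_Ici {R : ℝ} (hR : 0 < R) : clip R ⁻¹' Ici 0 = Ici 0 := by
  ext t
  simp only [mem_preimage, mem_Ici, clip, le_max_iff, le_min_iff]
  constructor
  · rintro (h | ⟨h, -⟩)
    · linarith
    · exact h
  · intro h; exact Or.inr ⟨h, hR.le⟩

lemma clip_preimage_Icc {R a b : ℝ} (ha : -R < a) (hb : b < R) :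
    clip R ⁻¹' Icc a b = Icc a b := by
  ext t
  simp only [mem_preimage, mem_Icc, clip]
  constructor
  · rintro ⟨h1, h2⟩
    rcases le_total t R with h3 | h3
    · rw [min_eq_left h3] at h1 h2
      rcases le_total (-R) t with h4 | h4
      · rw [max_eq_right h4] at h1 h2; exact ⟨h1, h2⟩
      · rw [max_eq_left h4] at h1; linarith
    · rw [min_eq_right h3] at h2
      exfalso
      have h5 := le_max_right (-R) R
      linarith
  · rintro ⟨h1, h2⟩
    rw [min_eq_left (by linarith), max_eq_right (by linarith)]
    exact ⟨h1, h2⟩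

lemma levyMean_mem_S (μ : Measure ℝ) [IsProbabilityMeasure μ] (hLm : levyMean μ = 0)
    {m : ℝ} (hm : 0 < m) : ENNReal.ofReal (1 / 2) ≤ μ (Iic m) := by
  set S := {m : ℝ | ENNReal.ofReal (1 / 2) ≤ μ (Set.Iic m)} with hS
  have hmono : ∀ {x y : ℝ}, x ∈ S → x ≤ y → y ∈ S :=
    fun hx h => hx.trans (measure_mono (Iic_subset_Iic.2 h))
  by_cases hbdd : BddBelow S
  · have hne : S.Nonempty := by
      have h1 : Filter.Tendsto (fun x => μ (Iic x)) Filter.atTop (nhds (μ univ)) :=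
        tendsto_measure_Iic_atTop μ
      have h2 : ENNReal.ofReal (1 / 2) < μ univ := by
        rw [measure_univ]
        exact ENNReal.ofReal_lt_one.2 (by norm_num)
      obtain ⟨x, hx⟩ := (h1.eventually (lt_mem_nhds h2)).exists
      exact ⟨x, hx.le⟩
    have hinf : sInf S < m := by
      have : sInf S = 0 := hLm
      rw [this]; exact hm
    obtain ⟨s, hsS, hsm⟩ := exists_lt_of_csInf_lt hne hinf
    exact hmono hsS hsm.le
  · obtain ⟨s, hsS, hsm⟩ := not_bddBelow_iff.1 hbdd m
    exact hmono hsS hsm.le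

lemma median_Iic (μ : Measure ℝ) [IsProbabilityMeasure μ] (hLm : levyMean μ = 0) :
    ENNReal.ofReal (1 / 2) ≤ μ (Iic 0) := by
  have hI : Iic (0 : ℝ) = ⋂ n : ℕ, Iic (((n : ℝ) + 1)⁻¹) := by
    ext t
    simp only [mem_Iic, mem_iInter]
    constructor
    · intro h n; exact h.trans (by positivity)
    · intro h
      by_contra hlt
      push_neg at hlt
      obtain ⟨n, hn⟩ := exists_nat_one_div_lt hlt
      have := h n
      rw [one_div] at hn
      linarith
  have hanti : Antitone fun n : ℕ => Iic (((n : ℝ) + 1)⁻¹) := by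
    intro n m h
    refine Iic_subset_Iic.2 ?_
    have hc : (n : ℝ) ≤ (m : ℝ) := by exact_mod_cast h
    gcongr
  have ht := tendsto_measure_iInter_atTop (μ := μ)
    (fun n => measurableSet_Iic.nullMeasurableSet) hanti ⟨0, measure_ne_top μ _⟩
  rw [← hI] at ht
  exact ge_of_tendsto ht (Filter.Eventually.of_forall fun n =>
    levyMean_mem_S μ hLm (by positivity))

lemma median_Ici (μ : Measure ℝ) [IsProbabilityMeasure μ] (hLm : levyMean μ = 0) :
    ENNReal.ofReal (1 / 2) ≤ μ (Ici 0) := by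
  set S := {m : ℝ | ENNReal.ofReal (1 / 2) ≤ μ (Set.Iic m)} with hS
  have hbdd : BddBelow S := by
    by_contra hbdd
    have hall : ∀ m : ℝ, ENNReal.ofReal (1 / 2) ≤ μ (Iic m) := by
      intro m
      obtain ⟨s, hsS, hsm⟩ := not_bddBelow_iff.1 hbdd m
      exact hsS.trans (measure_mono (Iic_subset_Iic.2 hsm.le))
    have hI : (⋂ n : ℕ, Iic (-(n : ℝ))) = (∅ : Set ℝ) := by
      ext t
      simp only [mem_iInter, mem_Iic, mem_empty_iff_false, iff_false]
      push_neg
      obtain ⟨n, hn⟩ := exists_nat_gt (-t)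
      exact ⟨n, by linarith⟩
    have hanti : Antitone fun n : ℕ => Iic (-(n : ℝ)) := by
      intro n m h
      refine Iic_subset_Iic.2 (neg_le_neg ?_)
      exact_mod_cast h
    have ht := tendsto_measure_iInter_atTop (μ := μ)
      (fun n => measurableSet_Iic.nullMeasurableSet) hanti ⟨0, measure_ne_top μ _⟩
    rw [hI] at ht
    have h0 : ENNReal.ofReal (1 / 2) ≤ μ (∅ : Set ℝ) :=
      ge_of_tendsto ht (Filter.Eventually.of_forall fun n => hall _)
    rw [measure_empty] at h0
    exact absurd (le_zero_iff.1 h0) (ENNReal.ofReal_pos.2 (by norm_num)).ne'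
  have hnotin : ∀ m : ℝ, m < 0 → μ (Iic m) < ENNReal.ofReal (1 / 2) := by
    intro m hm
    by_contra hc
    push_neg at hc
    have h1 : sInf S ≤ m := csInf_le hbdd hc
    have h2 : sInf S = 0 := hLm
    linarith [h1, h2 ▸ h1]
  have hU : Iio (0 : ℝ) = ⋃ n : ℕ, Iic (-((n : ℝ) + 1)⁻¹) := by
    ext t
    simp only [mem_Iio, mem_iUnion, mem_Iic]
    constructor
    · intro h
      obtain ⟨n, hn⟩ := exists_nat_one_div_lt (show (0:ℝ) < -t by linarith)
      rw [one_div] at hn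
      exact ⟨n, by linarith⟩
    · rintro ⟨n, hn⟩
      have : (0:ℝ) < ((n : ℝ) + 1)⁻¹ := by positivity
      linarith
  have hmono : Monotone fun n : ℕ => Iic (-((n : ℝ) + 1)⁻¹) := by
    intro n m h
    refine Iic_subset_Iic.2 (neg_le_neg ?_)
    have hc : (n : ℝ) ≤ (m : ℝ) := by exact_mod_cast h
    gcongr
  have hIio : μ (Iio 0) ≤ ENNReal.ofReal (1 / 2) := by
    rw [hU]
    exact le_of_tendsto (tendsto_measure_iUnion_atTop hmono)
      (Filter.Eventually.of_forall fun n => (hnotin _ (neg_lt_zero.2 (by positivity))).le)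
  have hcompl : μ (Ici 0) = 1 - μ (Iio 0) := by
    rw [← compl_Iio, measure_compl measurableSet_Iio (measure_ne_top μ _), measure_univ]
  rw [hcompl]
  have h2 : ENNReal.ofReal (1 / 2) = 2⁻¹ := by
    rw [show (1:ℝ)/2 = (2:ℝ)⁻¹ by norm_num, ENNReal.ofReal_inv_of_pos two_pos,
      ENNReal.ofReal_ofNat]
  calc ENNReal.ofReal (1 / 2) = 1 - 2⁻¹ := by rw [h2, ENNReal.one_sub_inv_two]
    _ ≤ 1 - μ (Iio 0) := tsub_le_tsub_left (h2 ▸ hIio) 1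

theorem partialDiam_clip_eq (μ : Measure ℝ) [IsProbabilityMeasure μ]
    (hLm : levyMean μ = 0) (κ R : ℝ) (hκ : κ ∈ Set.Ioo (0 : ℝ) (1 / 2)) (hR : 0 < R)
    (h : partialDiam (μ.map (clip R)) (1 - κ) < ENNReal.ofReal R) :
    partialDiam μ (1 - κ) = partialDiam (μ.map (clip R)) (1 - κ) := by
  obtain ⟨hκ0, hκ2⟩ := hκ
  have hclip := measurable_clip R
  set ν := μ.map (clip R) with hν
  have hmap : ∀ s : Set ℝ, MeasurableSet s → ν s = μ (clip R ⁻¹' s) :=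
    fun s hs => Measure.map_apply hclip hs
  have hprob : IsProbabilityMeasure ν := Measure.isProbabilityMeasure_map hclip.aemeasurable
  have hα : (0:ℝ) < 1 - κ := by linarith
  have dir1 : partialDiam ν (1 - κ) ≤ partialDiam μ (1 - κ) := by
    refine le_iInf₂ fun I hI => ?_
    obtain ⟨hImeas, hIμ⟩ := hI
    by_cases hbdd : Bornology.IsBounded I
    · have hIne : I.Nonempty := by
        refine nonempty_of_measure_ne_zero (μ := μ) fun h0 => ?_
        rw [h0] at hIμ
        exact absurd (le_zero_iff.1 hIμ) (ENNReal.ofReal_pos.2 hα).ne'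
      set a := sInf I with ha
      set b := sSup I with hb
      have hsub : I ⊆ Icc a b := fun t ht =>
        ⟨csInf_le hbdd.bddBelow ht, le_csSup hbdd.bddAbove ht⟩
      have hab : a ≤ b := by
        obtain ⟨t, ht⟩ := hIne
        exact (hsub ht).1.trans (hsub ht).2
      refine iInf₂_le_of_le (Icc (clip R a) (clip R b)) ⟨measurableSet_Icc, ?_⟩ ?_
      · rw [hmap _ measurableSet_Icc]
        refine hIμ.trans (measure_mono fun t ht => ?_)
        exact ⟨monotone_clip R (hsub ht).1, monotone_clip R (hsub ht).2⟩
      · change Metric.ediam _ ≤ Metric.ediam _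
        rw [Real.ediam_Icc, Real.ediam_eq hbdd]
        exact ENNReal.ofReal_le_ofReal (clip_sub_le R hab)
    · have hdiam : EMetric.diam I = ⊤ := by
        by_contra hd
        exact hbdd (Metric.isBounded_iff_ediam_ne_top.2 hd)
      rw [hdiam]
      exact le_top
  have dir2 : partialDiam μ (1 - κ) ≤ partialDiam ν (1 - κ) := by
    by_contra hlt
    push_neg at hlt
    have hlt2 : partialDiam ν (1 - κ) < min (partialDiam μ (1 - κ)) (ENNReal.ofReal R) :=
      lt_min hlt h
    rw [partialDiam, iInf_lt_iff] at hlt2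
    obtain ⟨I, hlt2⟩ := hlt2
    rw [iInf_lt_iff] at hlt2
    obtain ⟨⟨hImeas, hIν⟩, hId⟩ := hlt2
    have hdR : EMetric.diam I < ENNReal.ofReal R := hId.trans_le (min_le_right _ _)
    have hdμ : EMetric.diam I < partialDiam μ (1 - κ) := hId.trans_le (min_le_left _ _)
    have hbdd : Bornology.IsBounded I :=
      Metric.isBounded_iff_ediam_ne_top.2 (hdR.trans_le le_top).ne
    have hIne : I.Nonempty := by
      refine nonempty_of_measure_ne_zero (μ := ν) fun h0 => ?_
      rw [h0] at hIν
      exact absurd (le_zero_iff.1 hIν) (ENNReal.ofReal_pos.2 hα).ne'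
    set a := sInf I with ha
    set b := sSup I with hb
    have hsub : I ⊆ Icc a b := fun t ht =>
      ⟨csInf_le hbdd.bddBelow ht, le_csSup hbdd.bddAbove ht⟩
    have hdiam : EMetric.diam I = ENNReal.ofReal (b - a) := Real.ediam_eq hbdd
    have hba : b - a < R := by
      rw [hdiam] at hdR
      exact (ENNReal.ofReal_lt_ofReal_iff hR).1 hdR
    have hν1 : ENNReal.ofReal (1 / 2) ≤ ν (Iic 0) := by
      rw [hmap _ measurableSet_Iic, clip_preimage_Iic hR]
      exact median_Iic μ hLm
    have hν2 : ENNReal.ofReal (1 / 2) ≤ ν (Ici 0) := by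
      rw [hmap _ measurableSet_Ici, clip_preimage_Ici hR]
      exact median_Ici μ hLm
    have hsum : ∀ s : Set ℝ, MeasurableSet s → Disjoint I s → ν I + ν s ≤ 1 := by
      intro s hs hdisj
      rw [← measure_union hdisj hs]
      exact prob_le_one
    have hone : (1:ℝ≥0∞) < ENNReal.ofReal (1 - κ) + ENNReal.ofReal (1 / 2) := by
      rw [← ENNReal.ofReal_add (by linarith) (by norm_num), ← ENNReal.ofReal_one]
      exact (ENNReal.ofReal_lt_ofReal_iff (by linarith)).2 (by linarith)
    have hb0 : 0 ≤ b := by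
      by_contra hbneg
      push_neg at hbneg
      have hdisj : Disjoint I (Ici 0) := by
        refine Set.disjoint_left.2 fun t ht h0 => ?_
        have := (hsub ht).2
        simp only [mem_Ici] at h0
        linarith
      have := hsum _ measurableSet_Ici hdisj
      have hge : ENNReal.ofReal (1 - κ) + ENNReal.ofReal (1 / 2) ≤ ν I + ν (Ici 0) :=
        add_le_add hIν hν2
      exact absurd ((hone.trans_le hge).trans_le this) (lt_irrefl _)
    have ha0 : a ≤ 0 := by
      by_contra haneg
      push_neg at haneg
      have hdisj : Disjoint I (Iic 0) := by
        refine Set.disjoint_left.2 fun t ht h0 => ?_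
        have := (hsub ht).1
        simp only [mem_Iic] at h0
        linarith
      have := hsum _ measurableSet_Iic hdisj
      have hge : ENNReal.ofReal (1 - κ) + ENNReal.ofReal (1 / 2) ≤ ν I + ν (Iic 0) :=
        add_le_add hIν hν1
      exact absurd ((hone.trans_le hge).trans_le this) (lt_irrefl _)
    have hpre := clip_preimage_Icc (show -R < a by linarith) (show b < R by linarith)
    have hμIcc : ENNReal.ofReal (1 - κ) ≤ μ (Icc a b) := by
      calc ENNReal.ofReal (1 - κ) ≤ ν I := hIν
        _ ≤ ν (Icc a b) := measure_mono hsub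
        _ = μ (clip R ⁻¹' Icc a b) := hmap _ measurableSet_Icc
        _ = μ (Icc a b) := by rw [hpre]
    have hfinal : partialDiam μ (1 - κ) ≤ EMetric.diam (Icc a b) :=
      iInf₂_le _ ⟨measurableSet_Icc, hμIcc⟩
    change _ ≤ Metric.ediam _ at hfinal
    rw [Real.ediam_Icc, ← hdiam] at hfinal
    exact absurd (hfinal.trans_lt hdμ) (lt_irrefl _)
  exact le_antisymm dir2 dir1
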